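/- In the region r < 1, x > 0, d > d* of the system ẋ = 1 − εd, ḋ = x − βd, ṙ = γd − δr (with β, γ, δ, ε > 0, d* = δ/γ, εd* < 1): if at entry ḋ > 0 (equivalently x > βd*) and r₀ ∈ [0, 1), and if T_r := √(2/(γ(x̲ − β/ε))) < T_d := (√(G² + 2H²/ε) − G)/H where H = 1 − εd*, G = x̄ − βd*, x̲ ≤ x(entry) ≤ x̄ and x̲ > β/ε, then r reaches the value 1 before d reaches 1/ε, hence before d can return to d* or x can reach 0; i.e., the only possible transition is to the region r > 1, x > 0, d > d*. -/

import Mathlib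

/-- Monotonicity from a nonnegative derivative on `Icc 0 T`. -/
lemma monoAux (T : ℝ) (f f' : ℝ → ℝ)
    (hf : ∀ t ∈ Set.Icc (0:ℝ) T, HasDerivAt f (f' t) t)
    (h' : ∀ t ∈ Set.Ioo (0:ℝ) T, 0 ≤ f' t) :
    MonotoneOn f (Set.Icc 0 T) := by
  apply monotoneOn_of_deriv_nonneg (convex_Icc 0 T)
  · exact fun t ht => (hf t ht).continuousAt.continuousWithinAt
  · intro t ht
    rw [interior_Icc] at ht
    exact ((hf t (Set.Ioo_subset_Icc_self ht)).differentiableAt).differentiableWithinAt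
  · intro t ht
    rw [interior_Icc] at ht
    rw [(hf t (Set.Ioo_subset_Icc_self ht)).deriv]
    exact h' t ht

/-- Comparison with the initial value. -/
lemma monoAux0 (T : ℝ) (f f' : ℝ → ℝ)
    (hf : ∀ t ∈ Set.Icc (0:ℝ) T, HasDerivAt f (f' t) t)
    (h' : ∀ t ∈ Set.Ioo (0:ℝ) T, 0 ≤ f' t) :
    ∀ t ∈ Set.Icc (0:ℝ) T, f 0 ≤ f t := by
  intro t ht
  exact monoAux T f f' hf h' ⟨le_refl 0, ht.1.trans ht.2⟩ ht ht.1

set_option maxHeartbeats 2000000 in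
/-- Theorem 1: if `T_r < T_d`, a trajectory entering region rXD exits through `r = 1`,
before `d` can reach `1/ε`, return to `d*`, or `x` reach 0. -/
theorem stmt15 (β γ δ ε dstar H G xl xbar : ℝ) (x d r : ℝ → ℝ)
    (hβ : 0 < β) (hγ : 0 < γ) (hδ : 0 < δ) (hε : 0 < ε)
    (hdstar : dstar = δ / γ) (hεd : ε * dstar < 1)
    (hH : H = 1 - ε * dstar) (hG : G = xbar - β * dstar)
    (hx : ∀ t : ℝ, 0 ≤ t → HasDerivAt x (1 - ε * d t) t)
    (hd : ∀ t : ℝ, 0 ≤ t → HasDerivAt d (x t - β * d t) t)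
    (hr : ∀ t : ℝ, 0 ≤ t → HasDerivAt r (γ * d t - δ * r t) t)
    (hd0 : d 0 = dstar) (hx0l : xl ≤ x 0) (hx0u : x 0 ≤ xbar)
    (hentry : β * dstar < x 0) (hr0 : 0 ≤ r 0) (hr0' : r 0 < 1)
    (hxl : β / ε < xl)
    (hTrTd : Real.sqrt (2 / (γ * (xl - β / ε))) <
      (Real.sqrt (G ^ 2 + 2 * H ^ 2 / ε) - G) / H) :
    ∃ τ > 0, r τ = 1 ∧ ∀ t ∈ Set.Icc 0 τ,
      0 < x t ∧ dstar ≤ d t ∧ d t < 1 / ε ∧ r t ≤ 1 := by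
  -- basic positivity
  have hβε : 0 < β / ε := div_pos hβ hε
  have hc : 0 < xl - β / ε := by linarith
  set c : ℝ := xl - β / ε with hcdef
  have hγc : 0 < γ * c := mul_pos hγ hc
  set Tr : ℝ := Real.sqrt (2 / (γ * c)) with hTrdef
  have hTrpos : 0 < Tr := Real.sqrt_pos.mpr (div_pos two_pos hγc)
  have hTr2 : Tr ^ 2 = 2 / (γ * c) := Real.sq_sqrt (le_of_lt (div_pos two_pos hγc))
  have hH0 : 0 < H := by rw [hH]; linarith
  have hG0 : 0 < G := by
    rw [hG]; linarith
  have hd0lt : dstar < 1 / ε := by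
    rw [lt_div_iff₀ hε]; linarith [mul_comm ε dstar]
  have hγd : γ * dstar = δ := by
    rw [hdstar]; field_simp
  -- continuity helpers
  have hxcont : ∀ T : ℝ, ContinuousOn x (Set.Icc 0 T) :=
    fun T t ht => (hx t ht.1).continuousAt.continuousWithinAt
  have hdcont : ∀ T : ℝ, ContinuousOn d (Set.Icc 0 T) :=
    fun T t ht => (hd t ht.1).continuousAt.continuousWithinAt
  have hrcont : ∀ T : ℝ, ContinuousOn r (Set.Icc 0 T) :=
    fun T t ht => (hr t ht.1).continuousAt.continuousWithinAt
  -- Generic bootstrap: if d < 1/ε on [0,T) then on [0,T] we have x monotone etc.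
  -- Claim 1: d stays below 1/ε on [0, Tr].
  have hdlt : ∀ t ∈ Set.Icc (0:ℝ) Tr, d t < 1 / ε := by
    by_contra hcon
    push_neg at hcon
    obtain ⟨t₀, ht₀, ht₀d⟩ := hcon
    -- the set of times where d ≥ 1/ε
    set E : Set ℝ := {u | u ∈ Set.Icc (0:ℝ) Tr ∧ 1 / ε ≤ d u} with hEdef
    have hEne : E.Nonempty := ⟨t₀, ht₀, ht₀d⟩
    have hEclosed : IsClosed E := by
      have : E = Set.Icc (0:ℝ) Tr ∩ d ⁻¹' Set.Ici (1 / ε) := by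
        ext u; simp [hEdef, Set.mem_Icc, and_comm]
      rw [this]
      exact (hdcont Tr).preimage_isClosed_of_isClosed isClosed_Icc isClosed_Ici
    have hEbdd : BddBelow E := ⟨0, fun u hu => hu.1.1⟩
    set t₁ : ℝ := sInf E with ht₁def
    have ht₁E : t₁ ∈ E := hEclosed.csInf_mem hEne hEbdd
    have ht₁Icc : t₁ ∈ Set.Icc (0:ℝ) Tr := ht₁E.1
    have ht₁d : 1 / ε ≤ d t₁ := ht₁E.2
    -- before t₁, d < 1/ε
    have hbefore : ∀ u ∈ Set.Ico (0:ℝ) t₁, d u < 1 / ε := by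
      intro u hu
      by_contra h
      push_neg at h
      have : u ∈ E := ⟨⟨hu.1, hu.2.le.trans ht₁Icc.2⟩, h⟩
      exact absurd (csInf_le hEbdd this) (not_le.mpr hu.2)
    -- x is monotone on [0, t₁]
    have hxmono : MonotoneOn x (Set.Icc 0 t₁) := by
      apply monoAux t₁ x (fun u => 1 - ε * d u) (fun u hu => hx u hu.1)
      intro u hu
      have := hbefore u ⟨hu.1.le, hu.2⟩
      have : ε * d u < 1 := by
        calc ε * d u < ε * (1 / ε) := by exact (mul_lt_mul_iff_right₀ hε).mpr this
        _ = 1 := by field_simp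
      linarith
    have hxlow : ∀ u ∈ Set.Icc (0:ℝ) t₁, xl ≤ x u := by
      intro u hu
      exact hx0l.trans (hxmono ⟨le_refl 0, hu.1.trans hu.2⟩ hu hu.1)
    -- d is monotone on [0, t₁]
    have hdmono : MonotoneOn d (Set.Icc 0 t₁) := by
      apply monoAux t₁ d (fun u => x u - β * d u) (fun u hu => hd u hu.1)
      intro u hu
      have h1 := hbefore u ⟨hu.1.le, hu.2⟩
      have h2 : β * d u < β / ε := by
        calc β * d u < β * (1 / ε) := (mul_lt_mul_iff_right₀ hβ).mpr h1
        _ = β / ε := by ring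
      have h3 := hxlow u (Set.Ioo_subset_Icc_self hu)
      linarith
    have hdlow : ∀ u ∈ Set.Icc (0:ℝ) t₁, dstar ≤ d u := by
      intro u hu
      have := hdmono ⟨le_refl 0, hu.1.trans hu.2⟩ hu hu.1
      rwa [hd0] at this
    -- upper bound x u ≤ x 0 + H u
    have hxup : ∀ u ∈ Set.Icc (0:ℝ) t₁, x u ≤ x 0 + H * u := by
      intro u hu
      have hg : ∀ s ∈ Set.Icc (0:ℝ) t₁,
          HasDerivAt (fun v => x 0 + H * v - x v) (H - (1 - ε * d s)) s := by
        intro s hs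
        have h1 : HasDerivAt (fun v : ℝ => x 0 + H * v) H s := by
          simpa using ((hasDerivAt_id s).const_mul H).const_add (x 0)
        exact h1.sub (hx s hs.1)
      have := monoAux0 t₁ _ _ hg ?_ u hu
      · beta_reduce at this
        nlinarith [this]
      · intro s hs
        have := hdlow s (Set.Ioo_subset_Icc_self hs)
        rw [hH]
        nlinarith
    -- upper bound d u ≤ dstar + G u + H u²/2
    have hdup : ∀ u ∈ Set.Icc (0:ℝ) t₁, d u ≤ dstar + G * u + H * u ^ 2 / 2 := by
      intro u hu
      have hg : ∀ s ∈ Set.Icc (0:ℝ) t₁,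
          HasDerivAt (fun v => dstar + G * v + H * v ^ 2 / 2 - d v)
            ((G + H * s) - (x s - β * d s)) s := by
        intro s hs
        have ha : HasDerivAt (fun v : ℝ => dstar + G * v) G s := by
          simpa using ((hasDerivAt_id s).const_mul G).const_add dstar
        have hb : HasDerivAt (fun v : ℝ => H * v ^ 2 / 2) (H * s) s := by
          have h1 := ((hasDerivAt_pow 2 s).const_mul H).div_const 2
          exact h1.congr_deriv (by norm_num; ring)
        exact (ha.add hb).sub (hd s hs.1)
      have := monoAux0 t₁ _ _ hg ?_ u hu
      · beta_reduce at this
        nlinarith [this]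
      · intro s hs
        have h1 := hxup s (Set.Ioo_subset_Icc_self hs)
        have h2 := hdlow s (Set.Ioo_subset_Icc_self hs)
        have h3 : β * dstar ≤ β * d s := (mul_le_mul_iff_right₀ hβ).mpr h2
        rw [hG]
        nlinarith [hx0u]
    -- the quadratic stays below 1/ε before Td, contradiction
    have hkey : dstar + G * t₁ + H * t₁ ^ 2 / 2 < 1 / ε := by
      set s : ℝ := Real.sqrt (G ^ 2 + 2 * H ^ 2 / ε) with hsdef
      have hsarg : (0:ℝ) ≤ G ^ 2 + 2 * H ^ 2 / ε := by positivity
      have hs2 : s ^ 2 = G ^ 2 + 2 * H ^ 2 / ε := Real.sq_sqrt hsarg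
      have ht₁Td : t₁ < (s - G) / H := lt_of_le_of_lt ht₁Icc.2 hTrTd
      have ht₁0 : 0 ≤ t₁ := ht₁Icc.1
      have hlt : H * t₁ < s - G := by
        rwa [← lt_div_iff₀' hH0]
      have hsq : (H * t₁ + G) ^ 2 < s ^ 2 := by
        have h0 : 0 < H * t₁ + G := by positivity
        nlinarith
      have h2 : H ^ 2 * t₁ ^ 2 + 2 * G * H * t₁ < 2 * H ^ 2 / ε := by nlinarith
      have hHε : H / ε = 1 / ε - dstar := by
        rw [hH]; field_simp
      have h4 : 2 * H * (G * t₁ + H * t₁ ^ 2 / 2) < 2 * H * (H / ε) := by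
        have e1 : 2 * H * (G * t₁ + H * t₁ ^ 2 / 2) = H ^ 2 * t₁ ^ 2 + 2 * G * H * t₁ := by ring
        have e2 : 2 * H * (H / ε) = 2 * H ^ 2 / ε := by ring
        rw [e1, e2]; exact h2
      have h5 : G * t₁ + H * t₁ ^ 2 / 2 < H / ε :=
        lt_of_mul_lt_mul_left (by linarith) (by positivity : (0:ℝ) ≤ 2 * H)
      linarith
    have := hdup t₁ ⟨ht₁Icc.1, le_refl t₁⟩
    linarith
  -- Now work on [0, Tr].
  have hxmono : MonotoneOn x (Set.Icc 0 Tr) := by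
    apply monoAux Tr x (fun u => 1 - ε * d u) (fun u hu => hx u hu.1)
    intro u hu
    have h1 := hdlt u (Set.Ioo_subset_Icc_self hu)
    have : ε * d u < 1 := by
      calc ε * d u < ε * (1 / ε) := (mul_lt_mul_iff_right₀ hε).mpr h1
      _ = 1 := by field_simp
    linarith
  have hxlow : ∀ u ∈ Set.Icc (0:ℝ) Tr, xl ≤ x u := by
    intro u hu
    exact hx0l.trans (hxmono ⟨le_refl 0, hu.1.trans hu.2⟩ hu hu.1)
  have hdmono : MonotoneOn d (Set.Icc 0 Tr) := by
    apply monoAux Tr d (fun u => x u - β * d u) (fun u hu => hd u hu.1)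
    intro u hu
    have h1 := hdlt u (Set.Ioo_subset_Icc_self hu)
    have h2 : β * d u < β / ε := by
      calc β * d u < β * (1 / ε) := (mul_lt_mul_iff_right₀ hβ).mpr h1
      _ = β / ε := by ring
    have h3 := hxlow u (Set.Ioo_subset_Icc_self hu)
    linarith
  have hdlow : ∀ u ∈ Set.Icc (0:ℝ) Tr, dstar ≤ d u := by
    intro u hu
    have := hdmono ⟨le_refl 0, hu.1.trans hu.2⟩ hu hu.1
    rwa [hd0] at this
  -- linear lower bound on d
  have hdlin : ∀ u ∈ Set.Icc (0:ℝ) Tr, dstar + c * u ≤ d u := by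
    intro u hu
    have hg : ∀ s ∈ Set.Icc (0:ℝ) Tr,
        HasDerivAt (fun v => d v - (dstar + c * v)) ((x s - β * d s) - c) s := by
      intro s hs
      have h1 : HasDerivAt (fun v : ℝ => dstar + c * v) c s := by
        simpa using ((hasDerivAt_id s).const_mul c).const_add dstar
      exact (hd s hs.1).sub h1
    have := monoAux0 Tr _ _ hg ?_ u hu
    · simp only [hd0] at this
      linarith [this]
    · intro s hs
      have h1 := hdlt s (Set.Ioo_subset_Icc_self hs)
      have h2 : β * d s < β / ε := by
        calc β * d s < β * (1 / ε) := (mul_lt_mul_iff_right₀ hβ).mpr h1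
        _ = β / ε := by ring
      have h3 := hxlow s (Set.Ioo_subset_Icc_self hs)
      simp only [hcdef]
      linarith
  -- the set where r has reached 1
  set F : Set ℝ := {u | u ∈ Set.Icc (0:ℝ) Tr ∧ 1 ≤ r u} with hFdef
  have hFne : F.Nonempty := by
    by_contra hcon
    have hrlt : ∀ u ∈ Set.Icc (0:ℝ) Tr, r u < 1 := by
      intro u hu
      by_contra h
      push_neg at h
      exact hcon ⟨u, hu, h⟩
    -- then r grows at least like γ c t²/2, reaching ≥ 1 at Tr, contradiction
    have hg : ∀ s ∈ Set.Icc (0:ℝ) Tr,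
        HasDerivAt (fun v => r v - (r 0 + γ * c * v ^ 2 / 2))
          ((γ * d s - δ * r s) - γ * c * s) s := by
      intro s hs
      have hb : HasDerivAt (fun v : ℝ => r 0 + γ * c * v ^ 2 / 2) (γ * c * s) s := by
        have h1 := (((hasDerivAt_pow 2 s).const_mul (γ * c)).div_const 2).const_add (r 0)
        exact h1.congr_deriv (by norm_num; ring)
      exact (hr s hs.1).sub hb
    have hmono := monoAux0 Tr _ _ hg ?_ Tr ⟨hTrpos.le, le_refl Tr⟩
    · beta_reduce at hmono
      have hTrval : γ * c * Tr ^ 2 / 2 = 1 := by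
        rw [hTr2]; field_simp
      have := hrlt Tr ⟨hTrpos.le, le_refl Tr⟩
      nlinarith [hmono]
    · intro s hs
      have h1 := hdlin s (Set.Ioo_subset_Icc_self hs)
      have h2 := (hrlt s (Set.Ioo_subset_Icc_self hs)).le
      have h3 : γ * (dstar + c * s) ≤ γ * d s := (mul_le_mul_iff_right₀ hγ).mpr h1
      have h4 : δ * r s ≤ δ := by nlinarith
      nlinarith [hγd]
  have hFclosed : IsClosed F := by
    have : F = Set.Icc (0:ℝ) Tr ∩ r ⁻¹' Set.Ici 1 := by
      ext u; simp [hFdef]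
    rw [this]
    exact (hrcont Tr).preimage_isClosed_of_isClosed isClosed_Icc isClosed_Ici
  have hFbdd : BddBelow F := ⟨0, fun u hu => hu.1.1⟩
  set τ : ℝ := sInf F with hτdef
  have hτF : τ ∈ F := hFclosed.csInf_mem hFne hFbdd
  have hτIcc : τ ∈ Set.Icc (0:ℝ) Tr := hτF.1
  have hrτ : 1 ≤ r τ := hτF.2
  have hbef : ∀ u, 0 ≤ u → u < τ → r u < 1 := by
    intro u hu0 huτ
    by_contra h
    push_neg at h
    have : u ∈ F := ⟨⟨hu0, huτ.le.trans hτIcc.2⟩, h⟩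
    exact absurd (csInf_le hFbdd this) (not_le.mpr huτ)
  have hτpos : 0 < τ := by
    rcases lt_or_eq_of_le hτIcc.1 with h | h
    · exact h
    · exfalso; rw [← h] at hrτ; linarith
  have hreq : r τ = 1 := by
    by_contra h
    have h1 : 1 < r τ := lt_of_le_of_ne hrτ (Ne.symm h)
    have hIVT := intermediate_value_Icc hτpos.le (hrcont τ)
    have h1mem : (1:ℝ) ∈ Set.Icc (r 0) (r τ) := ⟨hr0'.le, hrτ⟩
    obtain ⟨s, hs, hrs⟩ := hIVT h1mem
    have hsτ : s < τ := lt_of_le_of_ne hs.2 (by rintro rfl; exact h hrs)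
    have := hbef s hs.1 hsτ
    rw [hrs] at this
    exact absurd this (lt_irrefl 1)
  refine ⟨τ, hτpos, hreq, ?_⟩
  intro t ht
  have htIcc : t ∈ Set.Icc (0:ℝ) Tr := ⟨ht.1, ht.2.trans hτIcc.2⟩
  refine ⟨?_, hdlow t htIcc, hdlt t htIcc, ?_⟩
  · have := hxlow t htIcc
    linarith
  · rcases lt_or_eq_of_le ht.2 with h | h
    · exact (hbef t ht.1 h).le
    · rw [h, hreq]
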